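/- Let dμ and dν be bounded ℝ^k-valued measures on a measurable space X, and for each ε ∈ ℝ write dν = A_ε |dμ_ε| + dν_s^ε with dν_s^ε ⊥ |dμ_ε|, where dμ_ε := dμ + ε dν. Then for ε₁ ≠ ε₂ the singular parts are mutually singular: |dν_s^{ε₁}| ⊥ |dν_s^{ε₂}|. Moreover, there exist at most countably many ε ∈ ℝ such that |dν_s^ε|(X) ≠ 0. -/

import Mathlib

open MeasureTheory Filter Set Topology
open scoped ENNReal NNReal InnerProductSpace

/-- If a vector field of a.e. unit norm integrates to zero over every measurable subset of a
measurable set `W`, then `W` is null. -/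
lemma null_of_forall_setIntegral_eq_zero {X : Type*} [MeasurableSpace X]
    {E : Type*} [NormedAddCommGroup E] [NormedSpace ℝ E] [CompleteSpace E]
    (ρ : Measure X) [IsFiniteMeasure ρ]
    {f : X → E} (hf : Integrable f ρ) (h1 : ∀ᵐ x ∂ρ, ‖f x‖ = 1)
    {W : Set X} (hW : MeasurableSet W)
    (hz : ∀ S : Set X, MeasurableSet S → S ⊆ W → ∫ x in S, f x ∂ρ = 0) :
    ρ W = 0 := by
  have hf' : Integrable f (ρ.restrict W) := hf.restrict
  have h0 : f =ᵐ[ρ.restrict W] 0 := by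
    apply hf'.ae_eq_zero_of_forall_setIntegral_eq_zero
    intro s hs _
    rw [Measure.restrict_restrict hs]
    exact hz (s ∩ W) (hs.inter hW) Set.inter_subset_right
  have h1' : ∀ᵐ x ∂ρ.restrict W, ‖f x‖ = 1 := ae_restrict_of_ae h1
  have hFalse : ∀ᵐ _x ∂ρ.restrict W, False := by
    filter_upwards [h0, h1'] with x hx hx1
    rw [hx] at hx1; simp at hx1
  have hbot : ρ.restrict W = 0 := ae_eq_bot.mp (eventually_false_iff_eq_bot.mp hFalse)
  calc ρ W = ρ.restrict W Set.univ := by rw [Measure.restrict_apply_univ]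
    _ = 0 := by rw [hbot]; rfl

/-- **Mutual singularity of the singular parts and countability of singular values
(Lemma 3.1).**  Setup as in Theorem B: `dμ_ε := dμ + ε dν` with
`dν = A_ε |dμ_ε| + dν_s^ε`, `dν_s^ε ⊥ |dμ_ε|`.  For `ε₁ ≠ ε₂` the singular parts are
mutually singular, `|dν_s^{ε₁}| ⊥ |dν_s^{ε₂}|`, and there are at most countably
many `ε` with `|dν_s^ε|(X) ≠ 0`. -/
theorem singular_parts_mutually_singular_and_countable
    (X : Type*) [MeasurableSpace X] (k : ℕ)
    (μtv : ℝ → Measure X) (N A : ℝ → X → EuclideanSpace ℝ (Fin k))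
    (νtv : Measure X) (Nν : X → EuclideanSpace ℝ (Fin k))
    (νstv : ℝ → Measure X) (Ns : ℝ → X → EuclideanSpace ℝ (Fin k))
    (hμfin : ∀ ε, IsFiniteMeasure (μtv ε))
    (hνfin : IsFiniteMeasure νtv)
    (hνsfin : ∀ ε, IsFiniteMeasure (νstv ε))
    (hN1 : ∀ ε, ∀ᵐ x ∂(μtv ε), ‖N ε x‖ = 1)
    (hNν1 : ∀ᵐ x ∂νtv, ‖Nν x‖ = 1)
    (hNs1 : ∀ ε, ∀ᵐ x ∂(νstv ε), ‖Ns ε x‖ = 1)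
    (hNint : ∀ ε, Integrable (N ε) (μtv ε))
    (hAint : ∀ ε, Integrable (A ε) (μtv ε))
    (hNνint : Integrable Nν νtv)
    (hNsint : ∀ ε, Integrable (Ns ε) (νstv ε))
    (hsing : ∀ ε, (νstv ε).MutuallySingular (μtv ε))
    (hadd : ∀ ε : ℝ, ∀ S : Set X, MeasurableSet S →
      ∫ x in S, N ε x ∂(μtv ε) = (∫ x in S, N 0 x ∂(μtv 0)) + ε • ∫ x in S, Nν x ∂νtv)
    (hRN : ∀ ε : ℝ, ∀ S : Set X, MeasurableSet S →
      ∫ x in S, Nν x ∂νtv = (∫ x in S, A ε x ∂(μtv ε)) + ∫ x in S, Ns ε x ∂(νstv ε))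
    : (∀ ε₁ ε₂ : ℝ, ε₁ ≠ ε₂ → (νstv ε₁).MutuallySingular (νstv ε₂)) ∧
      Set.Countable {ε : ℝ | νstv ε Set.univ ≠ 0} := by
  haveI := hνfin
  -- integrals over null sets vanish
  have hint0 : ∀ (ρ : Measure X) (f : X → EuclideanSpace ℝ (Fin k)) (S : Set X),
      ρ S = 0 → ∫ x in S, f x ∂ρ = 0 := by
    intro ρ f S hS
    rw [Measure.restrict_eq_zero.mpr hS, integral_zero_measure]
  -- if W is null for two different μtv's, then the vector measure ν vanishes on subsets of W
  have hν0 : ∀ ε₁ ε₂ : ℝ, ε₁ ≠ ε₂ → ∀ W : Set X, μtv ε₁ W = 0 → μtv ε₂ W = 0 →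
      ∀ S : Set X, MeasurableSet S → S ⊆ W → ∫ x in S, Nν x ∂νtv = 0 := by
    intro ε₁ ε₂ hne W h1 h2 S hS hSW
    have z1 := hadd ε₁ S hS
    have z2 := hadd ε₂ S hS
    rw [hint0 _ _ _ (measure_mono_null hSW h1)] at z1
    rw [hint0 _ _ _ (measure_mono_null hSW h2)] at z2
    have hsub : (ε₁ - ε₂) • ∫ x in S, Nν x ∂νtv = 0 := by
      have := z1.symm.trans z2
      rw [sub_smul]
      have h' : ε₁ • ∫ x in S, Nν x ∂νtv = ε₂ • ∫ x in S, Nν x ∂νtv := by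
        have := add_left_cancel this
        exact this
      rw [h', sub_self]
    rcases smul_eq_zero.mp hsub with h | h
    · exact absurd (sub_eq_zero.mp h) hne
    · exact h
  -- if W is μtv ε-null and ν vanishes on subsets of W, then νstv ε W = 0
  have hs0 : ∀ ε : ℝ, ∀ W : Set X, MeasurableSet W → μtv ε W = 0 →
      (∀ S : Set X, MeasurableSet S → S ⊆ W → ∫ x in S, Nν x ∂νtv = 0) → νstv ε W = 0 := by
    intro ε W hWm hWμ hWν
    haveI := hνsfin ε
    apply null_of_forall_setIntegral_eq_zero (νstv ε) (hNsint ε) (hNs1 ε) hWm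
    intro S hS hSW
    have h := hRN ε S hS
    rw [hint0 _ _ _ (measure_mono_null hSW hWμ), zero_add] at h
    rw [← h]
    exact hWν S hS hSW
  constructor
  · -- mutual singularity
    intro ε₁ ε₂ hne
    obtain ⟨s₁, hs₁m, hs₁, hs₁c⟩ := hsing ε₁
    obtain ⟨s₂, hs₂m, hs₂, hs₂c⟩ := hsing ε₂
    refine ⟨s₁, hs₁m, hs₁, ?_⟩
    have hW : νstv ε₂ (s₁ᶜ ∩ s₂ᶜ) = 0 := by
      apply hs0 ε₂ _ (hs₁m.compl.inter hs₂m.compl)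
        (measure_mono_null Set.inter_subset_right hs₂c)
      exact hν0 ε₁ ε₂ hne _ (measure_mono_null Set.inter_subset_left hs₁c)
        (measure_mono_null Set.inter_subset_right hs₂c)
    have hsub : s₁ᶜ ⊆ (s₁ᶜ ∩ s₂ᶜ) ∪ s₂ := by
      intro x hx; by_cases h : x ∈ s₂ <;> simp [hx, h]
    exact measure_mono_null hsub (measure_union_null hW hs₂)
  · -- countability
    set C : ℝ → Set X := fun ε => ((hsing ε).nullSet)ᶜ with hC
    have hCm : ∀ ε, MeasurableSet (C ε) := fun ε => (hsing ε).measurableSet_nullSet.compl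
    have hCμ : ∀ ε, μtv ε (C ε) = 0 := fun ε => (hsing ε).measure_compl_nullSet
    have hCs : ∀ ε, νstv ε (C ε)ᶜ = 0 := by
      intro ε; rw [hC]; simp only [compl_compl]; exact (hsing ε).measure_nullSet
    -- the carriers are a.e. disjoint for νtv
    have hdisj : Pairwise (Function.onFun (AEDisjoint νtv) C) := by
      intro ε₁ ε₂ hne
      apply null_of_forall_setIntegral_eq_zero νtv hNνint hNν1
        ((hCm ε₁).inter (hCm ε₂))
      exact hν0 ε₁ ε₂ hne _ (measure_mono_null Set.inter_subset_left (hCμ ε₁))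
        (measure_mono_null Set.inter_subset_right (hCμ ε₂))
    have hcount : Set.Countable {ε : ℝ | 0 < νtv (C ε)} :=
      Measure.countable_meas_pos_of_disjoint_of_meas_iUnion_ne_top₀ νtv
        (fun ε => (hCm ε).nullMeasurableSet) hdisj
        (ne_of_lt (lt_of_le_of_lt (measure_mono (Set.subset_univ _)) (measure_lt_top νtv _)))
    apply hcount.mono
    intro ε hε
    simp only [Set.mem_setOf_eq] at hε ⊢
    rw [pos_iff_ne_zero]
    intro hCν
    apply hε
    have h1 : νstv ε (C ε) = 0 := by
      apply hs0 ε _ (hCm ε) (hCμ ε)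
      intro S hS hSW
      exact hint0 _ _ _ (measure_mono_null hSW hCν)
    have : Set.univ ⊆ C ε ∪ (C ε)ᶜ := by simp
    exact measure_mono_null this (measure_union_null h1 (hCs ε))
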